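/- Suppose (Ω, T, μ) is an ergodic subshift over a finite alphabet, v: alphabet → ℝ a potential, and suppose there is a letter i such that for every N, μ({ω : ω₀ = ω₁ = ⋯ = ω_{N−1} = i}) > 0. Then the almost sure spectrum Σ_v of the associated ergodic Schrödinger operators contains the interval [−2 + v(i), 2 + v(i)]. -/

import Mathlib

open MeasureTheory Complex
open scoped ENNReal ComplexConjugate InnerProductSpace

set_option maxHeartbeats 1600000

noncomputable section

local notation "ℓ²" => lp (fun _ : ℤ => ℂ) 2

lemma lp2_summable_sq (f : ℓ²) : Summable fun n : ℤ => ‖(f n : ℂ)‖ ^ 2 := by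
  have := (memℓp_gen_iff (by norm_num : (0:ℝ) < (2 : ℝ≥0∞).toReal)).1 (lp.memℓp f)
  have h22 : (2 : ℝ≥0∞).toReal = 2 := by norm_num
  rw [h22] at this
  simpa [Real.rpow_two] using this

lemma lp2_norm_sq (f : ℓ²) : ‖f‖ ^ 2 = ∑' n : ℤ, ‖(f n : ℂ)‖ ^ 2 := by
  have := lp.norm_rpow_eq_tsum (p := 2) (by norm_num) f
  have h22 : (2 : ℝ≥0∞).toReal = 2 := by norm_num
  rw [h22] at this
  simpa [Real.rpow_two] using this

lemma aux_summable_norm (f g : ℓ²) (k : ℤ) :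
    Summable fun n : ℤ => ‖(f (n + k) : ℂ)‖ * ‖(g n : ℂ)‖ := by
  have hf' : Summable fun n : ℤ => ‖(f (n + k) : ℂ)‖ ^ 2 :=
    (Equiv.addRight k).summable_iff.2 (lp2_summable_sq f)
  have hb := (hf'.add (lp2_summable_sq g)).div_const 2
  refine Summable.of_nonneg_of_le (fun n => by positivity) (fun n => ?_) hb
  nlinarith [norm_nonneg (f (n+k) : ℂ), norm_nonneg (g n : ℂ),
    sq_nonneg (‖(f (n+k) : ℂ)‖ - ‖(g n : ℂ)‖)]

lemma summable_shift_mul (f g : ℓ²) (k : ℤ) :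
    Summable fun n : ℤ => conj (f (n + k) : ℂ) * g n := by
  refine Summable.of_norm_bounded (aux_summable_norm f g k) (fun n => ?_)
  rw [norm_mul, RCLike.norm_conj]

lemma summable_weighted (f g : ℓ²) (V : ℤ → ℝ) (C : ℝ) (hC : ∀ n, |V n| ≤ C) :
    Summable fun n : ℤ => (V n : ℂ) * (conj (f n : ℂ) * g n) := by
  have h0 : Summable fun n : ℤ => C * (‖(f n : ℂ)‖ * ‖(g n : ℂ)‖) := by
    have := (aux_summable_norm f g 0).mul_left C
    simpa using this
  refine Summable.of_norm_bounded h0 (fun n => ?_)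
  rw [norm_mul, norm_mul, RCLike.norm_conj, Complex.norm_real, Real.norm_eq_abs]
  have : ‖(f n : ℂ)‖ * ‖(g n : ℂ)‖ ≥ 0 := by positivity
  exact mul_le_mul_of_nonneg_right (hC n) this

lemma schrodinger_selfadjoint (V : ℤ → ℝ) (C : ℝ) (hC : ∀ n, |V n| ≤ C)
    (T : ℓ² →L[ℂ] ℓ²)
    (hT : ∀ u : ℓ², ∀ n : ℤ, (T u : ∀ _ : ℤ, ℂ) n = u (n+1) + u (n-1) + (V n : ℂ) * u n) :
    IsSelfAdjoint T := by
  apply LinearMap.IsSymmetric.isSelfAdjoint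
  intro f g
  simp only [ContinuousLinearMap.coe_coe]
  rw [lp.inner_eq_tsum, lp.inner_eq_tsum]
  have hL : ∀ n : ℤ, ⟪(T f : ∀ _ : ℤ, ℂ) n, (g : ∀ _ : ℤ, ℂ) n⟫_ℂ
      = conj (f (n + 1) : ℂ) * g n + conj (f (n + (-1)) : ℂ) * g n
        + (V n : ℂ) * (conj (f n : ℂ) * g n) := by
    intro n
    rw [RCLike.inner_apply, hT]
    have : n - 1 = n + (-1) := by ring
    rw [this]
    push_cast
    rw [map_add, map_add, map_mul, Complex.conj_ofReal]
    ring
  have hR : ∀ n : ℤ, ⟪(f : ∀ _ : ℤ, ℂ) n, (T g : ∀ _ : ℤ, ℂ) n⟫_ℂ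
      = conj (f n : ℂ) * g (n + 1) + conj (f n : ℂ) * g (n + (-1))
        + (V n : ℂ) * (conj (f n : ℂ) * g n) := by
    intro n
    rw [RCLike.inner_apply, hT]
    have : n - 1 = n + (-1) := by ring
    rw [this]
    ring
  rw [tsum_congr hL, tsum_congr hR]
  have S1 := summable_shift_mul f g 1
  have S2 := summable_shift_mul f g (-1)
  have S3 := summable_weighted f g V C hC
  have T1 : Summable fun n : ℤ => conj (f n : ℂ) * g (n + 1) := by
    refine Summable.of_norm_bounded (aux_summable_norm g f 1) (fun n => ?_)
    rw [norm_mul, RCLike.norm_conj, mul_comm]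
  have T2 : Summable fun n : ℤ => conj (f n : ℂ) * g (n + (-1)) := by
    refine Summable.of_norm_bounded (aux_summable_norm g f (-1)) (fun n => ?_)
    rw [norm_mul, RCLike.norm_conj, mul_comm]
  rw [Summable.tsum_add (S1.add S2) S3, Summable.tsum_add S1 S2, Summable.tsum_add (T1.add T2) S3, Summable.tsum_add T1 T2]
  congr 1
  have R1 : ∑' n : ℤ, conj (f (n + 1) : ℂ) * g n = ∑' n : ℤ, conj (f n : ℂ) * g (n + (-1)) := by
    rw [← (Equiv.addRight (1:ℤ)).tsum_eq (fun m => conj (f m : ℂ) * g (m + (-1)))]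
    exact tsum_congr fun n => by simp
  have R2 : ∑' n : ℤ, conj (f (n + (-1)) : ℂ) * g n = ∑' n : ℤ, conj (f n : ℂ) * g (n + 1) := by
    rw [← (Equiv.addRight (-1:ℤ)).tsum_eq (fun m => conj (f m : ℂ) * g (m + 1))]
    exact tsum_congr fun n => by simp
  rw [R1, R2, add_comm]

lemma aux_lower_bound {E' : Type*} [NormedAddCommGroup E'] [InnerProductSpace ℂ E']
    [CompleteSpace E']
    (T : E' →L[ℂ] E') (hTsa : IsSelfAdjoint T) (hU : IsUnit T) {d : ℝ} (hd : 0 < d)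
    (hspec : ∀ z ∈ spectrum ℂ T, d ≤ ‖z‖) (x : E') : d * ‖x‖ ≤ ‖T x‖ := by
  set u := hU.unit with hu
  set S : E' →L[ℂ] E' := ↑u⁻¹ with hSdef
  have hTu : (u : E' →L[ℂ] E') = T := hU.unit_spec
  have hTS : T * S = 1 := by rw [← hTu]; exact u.mul_inv
  have hST : S * T = 1 := by rw [← hTu]; exact u.inv_mul
  have hSsa : IsSelfAdjoint S := by
    have h1 : star S * T = 1 := by
      have : star S * star T = star (T * S) := (star_mul T S).symm
      rw [hTsa.star_eq] at this
      rw [this, hTS, star_one]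
    calc star S = star S * (T * S) := by rw [hTS, mul_one]
    _ = (star S * T) * S := by rw [mul_assoc]
    _ = S := by rw [h1, one_mul]
  have hrad : spectralRadius ℂ S ≤ ENNReal.ofReal d⁻¹ := by
    rw [spectralRadius]
    refine iSup₂_le fun z hz => ?_
    have hz0 : z ≠ 0 := by
      intro h
      rw [h] at hz
      exact spectrum.zero_notMem ℂ (u⁻¹).isUnit hz
    have hzinv : z⁻¹ ∈ spectrum ℂ T := by
      have h := (spectrum.inv_mem_iff (r := Units.mk0 z hz0) (a := u⁻¹)).1 (by simpa using hz)
      rw [← hTu]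
      simpa using h
    have hle : d ≤ ‖z⁻¹‖ := hspec _ hzinv
    have hzn : ‖z‖ ≤ d⁻¹ := by
      rw [norm_inv] at hle
      have h0 : 0 < ‖z‖ := norm_pos_iff.2 hz0
      rw [le_inv_comm₀ hd h0] at hle
      exact hle
    calc (‖z‖₊ : ℝ≥0∞) = ENNReal.ofReal ‖z‖ := (ofReal_norm z).symm
    _ ≤ ENNReal.ofReal d⁻¹ := ENNReal.ofReal_le_ofReal hzn
  have hnorm : ‖S‖ ≤ d⁻¹ := by
    have := hSsa.spectralRadius_eq_nnnorm
    rw [this] at hrad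
    change ‖S‖ₑ ≤ _ at hrad
    rw [← ofReal_norm] at hrad
    exact (ENNReal.ofReal_le_ofReal_iff (by positivity)).1 hrad
  have hx : x = S (T x) := by
    have : (S * T) x = (1 : E' →L[ℂ] E') x := by rw [hST]
    simpa using this.symm
  have h1 : ‖x‖ ≤ d⁻¹ * ‖T x‖ := by
    calc ‖x‖ = ‖S (T x)‖ := by rw [← hx]
    _ ≤ ‖S‖ * ‖T x‖ := S.le_opNorm _
    _ ≤ d⁻¹ * ‖T x‖ := by gcongr
  have := mul_le_mul_of_nonneg_left h1 hd.le
  calc d * ‖x‖ ≤ d * (d⁻¹ * ‖T x‖) := this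
  _ = ‖T x‖ := by field_simp

end

open MeasureTheory

/-- for an ergodic subshift with a letter `i` such that arbitrarily long constant
`i`-blocks have positive measure, the almost sure spectrum of the associated ergodic
Schrödinger operators contains `[−2 + v(i), 2 + v(i)]`. -/
theorem stmt_12 {A : Type*} [Fintype A] [MeasurableSpace A]
    (μ : Measure (ℤ → A)) [IsProbabilityMeasure μ]
    (hshift : Ergodic (fun ω (n : ℤ) => ω (n + 1)) μ)
    (v : A → ℝ) (i : A)
    (hblocks : ∀ N : ℕ, 0 < μ {ω | ∀ n : ℤ, 0 ≤ n → n < N → ω n = i})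
    (H : (ℤ → A) → lp (fun _ : ℤ => ℂ) 2 →L[ℂ] lp (fun _ : ℤ => ℂ) 2)
    (hH : ∀ ω : ℤ → A, ∀ u : lp (fun _ : ℤ => ℂ) 2, ∀ n : ℤ,
      (H ω u : ∀ _ : ℤ, ℂ) n = u (n + 1) + u (n - 1) + (v (ω n) : ℂ) * u n)
    (Sv : Set ℂ)
    (hS : ∀ᵐ ω ∂μ, spectrum ℂ (H ω) = Sv) :
    ∀ E : ℝ, -2 + v i ≤ E → E ≤ 2 + v i → (E : ℂ) ∈ Sv := by
  classical
  intro E hE1 hE2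
  by_contra hE
  -- potential bound
  obtain ⟨C, hC⟩ : ∃ C : ℝ, ∀ a : A, |v a| ≤ C := by
    rcases isEmpty_or_nonempty A with h | h
    · exact ⟨0, fun a => (h.false a).elim⟩
    · obtain ⟨a0, ha0⟩ := Finset.exists_max_image Finset.univ (fun a => |v a|)
        ⟨Classical.arbitrary A, Finset.mem_univ _⟩
      exact ⟨|v a0|, fun a => ha0.2 a (Finset.mem_univ a)⟩
  -- selected ω with long blocks and the right spectrum
  have hexists : ∀ M : ℕ, ∃ ω : ℤ → A,
      (∀ n : ℤ, 0 ≤ n → n < (M:ℤ) → ω n = i) ∧ spectrum ℂ (H ω) = Sv := by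
    intro M
    by_contra hc
    push_neg at hc
    have h0 : μ {ω | ¬ spectrum ℂ (H ω) = Sv} = 0 := by
      simpa [ae_iff] using hS
    have hsub : {ω : ℤ → A | ∀ n : ℤ, 0 ≤ n → n < (M:ℤ) → ω n = i}
        ⊆ {ω | ¬ spectrum ℂ (H ω) = Sv} := fun ω hω => hc ω hω
    exact (hblocks M).ne' (le_antisymm ((measure_mono hsub).trans h0.le) zero_le)
  -- Sv is closed and nonempty
  obtain ⟨ω₀, -, hω₀⟩ := hexists 0
  have hnt : Nontrivial (lp (fun _ : ℤ => ℂ) 2 →L[ℂ] lp (fun _ : ℤ => ℂ) 2) := by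
    refine ⟨1, 0, fun h => ?_⟩
    have hx : (lp.single 2 (0:ℤ) (1:ℂ) : lp (fun _ : ℤ => ℂ) 2) = 0 := by
      have := ContinuousLinearMap.ext_iff.1 h (lp.single 2 (0:ℤ) (1:ℂ))
      simpa using this
    have : (lp.single 2 (0:ℤ) (1:ℂ) : ∀ _ : ℤ, ℂ) 0 = 0 := by rw [hx]; simp
    rw [lp.single_apply] at this
    simp at this
  have hclosed : IsClosed Sv := hω₀ ▸ spectrum.isClosed _
  have hne : Sv.Nonempty := hω₀ ▸ spectrum.nonempty _
  set d : ℝ := Metric.infDist (E : ℂ) Sv with hddef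
  have hd : 0 < d := (hclosed.notMem_iff_infDist_pos hne).1 hE
  -- choose N
  set N : ℕ := max 2 (⌈(4:ℝ)/d^2⌉₊ + 1) with hNdef
  have hN2 : 2 ≤ N := le_max_left _ _
  have hNd : (4:ℝ)/d^2 < N := by
    have h1 : (4:ℝ)/d^2 < ⌈(4:ℝ)/d^2⌉₊ + 1 := lt_of_le_of_lt (Nat.le_ceil _) (by norm_num)
    refine h1.trans_le ?_
    have := le_max_right 2 (⌈(4:ℝ)/d^2⌉₊ + 1)
    exact_mod_cast Nat.cast_le.2 this
  obtain ⟨ω, hωi, hωspec⟩ := hexists N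
  -- phase
  set θ : ℝ := Real.arccos ((E - v i)/2) with hθdef
  have hθ : Real.cos θ = (E - v i) / 2 :=
    Real.cos_arccos (by linarith) (by linarith)
  have key : Complex.exp (θ*I) + Complex.exp (-(θ*I)) = (E:ℂ) - v i := by
    have e1 : Complex.exp ((θ:ℂ)*I) + Complex.exp (-((θ:ℂ)*I)) = 2 * (Real.cos θ : ℂ) := by
      rw [Complex.exp_mul_I, ← neg_mul, Complex.exp_mul_I, Complex.cos_neg, Complex.sin_neg,
        ← Complex.ofReal_cos]
      ring
    rw [e1, hθ]
    push_cast
    ring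
  -- test vector
  set u : ℤ → ℂ := fun n => if 0 ≤ n ∧ n < (N:ℤ) then Complex.exp ((n:ℂ) * θ * I) else 0
    with hudef
  have hu_mem : Memℓp u 2 := by
    apply memℓp_gen
    apply summable_of_ne_finset_zero (s := Finset.Ico (0:ℤ) (N:ℤ))
    intro n hn
    rw [Finset.mem_Ico] at hn
    have : u n = 0 := by
      rw [hudef]
      simp only
      rw [if_neg (by tauto)]
    rw [this, norm_zero]
    rw [Real.zero_rpow (by norm_num)]
  set U : lp (fun _ : ℤ => ℂ) 2 := ⟨u, hu_mem⟩ with hUdef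
  have hU_apply : ∀ n : ℤ, (U : ∀ _ : ℤ, ℂ) n = u n := fun n => rfl
  have hu_norm : ∀ n : ℤ, 0 ≤ n → n < (N:ℤ) → ‖u n‖ = 1 := by
    intro n h0 h1
    rw [hudef]
    simp only
    rw [if_pos ⟨h0, h1⟩]
    have : (n:ℂ) * θ * I = ((n * θ : ℝ) : ℂ) * I := by push_cast; ring
    rw [this, Complex.norm_exp_ofReal_mul_I]
  have hUnorm : ‖U‖ ^ 2 = N := by
    rw [lp2_norm_sq]
    rw [tsum_eq_sum (s := Finset.Ico (0:ℤ) (N:ℤ)) (fun n hn => by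
      rw [Finset.mem_Ico] at hn
      rw [hU_apply]
      have : u n = 0 := by rw [hudef]; simp only; rw [if_neg (by tauto)]
      rw [this, norm_zero]; norm_num)]
    have : ∀ n ∈ Finset.Ico (0:ℤ) (N:ℤ), ‖(U : ∀ _ : ℤ, ℂ) n‖ ^ 2 = 1 := by
      intro n hn
      rw [Finset.mem_Ico] at hn
      rw [hU_apply, hu_norm n hn.1 hn.2]
      norm_num
    rw [Finset.sum_congr rfl this, Finset.sum_const, Int.card_Ico]
    simp

  -- norm-one exponentials
  have hnorm_exp : ∀ z : ℝ, ‖Complex.exp ((z:ℂ) * I)‖ = 1 := fun z => by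
    rw [Complex.norm_exp_ofReal_mul_I]
  have hnorm_e : ∀ n : ℤ, ‖Complex.exp ((n:ℂ) * θ * I)‖ = 1 := by
    intro n
    rw [show ((n:ℤ):ℂ) * θ * I = (((n * θ : ℝ)):ℂ) * I by push_cast; ring]
    exact hnorm_exp _
  have hnorm2 : ‖Complex.exp (-((θ:ℂ) * I))‖ = 1 := by
    rw [show -((θ:ℂ) * I) = (((-θ : ℝ)):ℂ) * I by push_cast; ring]
    exact hnorm_exp _
  have hnorm3 : ‖Complex.exp ((θ:ℂ) * I)‖ = 1 := hnorm_exp θ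
  have hu_in : ∀ n : ℤ, 0 ≤ n → n < (N:ℤ) → u n = Complex.exp ((n:ℂ) * θ * I) := by
    intro n h1 h2
    simp only [hudef]
    rw [if_pos ⟨h1, h2⟩]
  have hu_out : ∀ n : ℤ, n < 0 ∨ (N:ℤ) ≤ n → u n = 0 := by
    intro n h
    simp only [hudef]
    rw [if_neg (by omega)]
  -- self-adjointness
  have hsa : IsSelfAdjoint (H ω) :=
    schrodinger_selfadjoint (fun n => v (ω n)) C (fun n => hC _) (H ω) (fun u n => hH ω u n)
  set T' : lp (fun _ : ℤ => ℂ) 2 →L[ℂ] lp (fun _ : ℤ => ℂ) 2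
    := algebraMap ℂ _ ((E:ℝ):ℂ) - H ω with hT'def
  have hT'sa : IsSelfAdjoint T' := by
    have h1 : IsSelfAdjoint (algebraMap ℂ (lp (fun _ : ℤ => ℂ) 2 →L[ℂ] lp (fun _ : ℤ => ℂ) 2)
        ((E:ℝ):ℂ)) := by
      rw [IsSelfAdjoint, Algebra.algebraMap_eq_smul_one, star_smul, star_one]
      congr 1
      simp [RCLike.star_def, Complex.conj_ofReal]
    exact h1.sub hsa
  have hunit : IsUnit T' := by
    have hnot : ((E:ℝ):ℂ) ∉ spectrum ℂ (H ω) := by rw [hωspec]; exact hE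
    exact spectrum.notMem_iff.1 hnot
  have hspecb : ∀ z ∈ spectrum ℂ T', d ≤ ‖z‖ := by
    intro z hz
    rw [hT'def, ← spectrum.singleton_sub_eq] at hz
    obtain ⟨a, ha, b, hb, rfl⟩ := Set.mem_sub.1 hz
    rw [Set.mem_singleton_iff] at ha
    subst ha
    rw [hωspec] at hb
    have h := Metric.infDist_le_dist_of_mem (x := ((E:ℝ):ℂ)) hb
    rw [dist_eq_norm] at h
    exact h
  -- coordinates of T' U
  have hwcoord : ∀ n : ℤ, (T' U : ∀ _ : ℤ, ℂ) n
      = (E:ℂ) * u n - (u (n+1) + u (n-1) + (v (ω n) : ℂ) * u n) := by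
    intro n
    rw [hT'def, ContinuousLinearMap.sub_apply, lp.coeFn_sub, Pi.sub_apply, hH]
    rw [hU_apply, hU_apply, hU_apply]
    congr 1
  -- pointwise bound
  have hbound : ∀ n : ℤ, ‖(T' U : ∀ _ : ℤ, ℂ) n‖ ^ 2
      ≤ if n = -1 ∨ n = 0 ∨ n = (N:ℤ)-1 ∨ n = (N:ℤ) then (1:ℝ) else 0 := by
    intro n
    by_cases hcase : n = -1 ∨ n = 0 ∨ n = (N:ℤ)-1 ∨ n = (N:ℤ)
    · rw [if_pos hcase]
      rcases hcase with h | h | h | h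
      · -- n = -1
        subst h
        rw [hwcoord, hu_out (-1) (by omega), hu_out (-1-1) (by omega),
          show (-1:ℤ)+1 = 0 by norm_num, hu_in 0 (by omega) (by omega)]
        rw [show (E:ℂ) * 0 - (Complex.exp (((0:ℤ):ℂ)*θ*I) + 0 + (v (ω (-1)) : ℂ) * 0)
          = -Complex.exp (((0:ℤ):ℂ)*θ*I) by ring, norm_neg, hnorm_e 0]
        norm_num
      · -- n = 0
        subst h
        rw [hwcoord, show (0:ℤ)-1 = -1 by norm_num, hu_out (-1) (by omega),
          show (0:ℤ)+1 = 1 by norm_num, hu_in 1 (by omega) (by omega),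
          hu_in 0 (by omega) (by omega), hωi 0 (by omega) (by omega)]
        have hp1 : Complex.exp (((1:ℤ):ℂ)*θ*I)
            = Complex.exp (((0:ℤ):ℂ)*θ*I) * Complex.exp ((θ:ℂ)*I) := by
          rw [← Complex.exp_add]; congr 1; push_cast; ring
        rw [hp1]
        have hval : (E:ℂ) * Complex.exp (((0:ℤ):ℂ)*θ*I)
            - (Complex.exp (((0:ℤ):ℂ)*θ*I) * Complex.exp ((θ:ℂ)*I) + 0
              + (v i : ℂ) * Complex.exp (((0:ℤ):ℂ)*θ*I))
            = Complex.exp (((0:ℤ):ℂ)*θ*I) * Complex.exp (-((θ:ℂ)*I)) := by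
          linear_combination -Complex.exp (((0:ℤ):ℂ)*θ*I) * key
        rw [hval, norm_mul, hnorm_e 0, hnorm2]
        norm_num
      · -- n = N-1
        subst h
        rw [hwcoord, show (N:ℤ)-1+1 = (N:ℤ) by ring, hu_out (N:ℤ) (by omega),
          hu_in ((N:ℤ)-1) (by omega) (by omega), hu_in ((N:ℤ)-1-1) (by omega) (by omega),
          hωi ((N:ℤ)-1) (by omega) (by omega)]
        have hp2 : Complex.exp ((((N:ℤ)-1-1 : ℤ):ℂ)*θ*I)
            = Complex.exp ((((N:ℤ)-1 : ℤ):ℂ)*θ*I) * Complex.exp (-((θ:ℂ)*I)) := by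
          rw [← Complex.exp_add]; congr 1; push_cast; ring
        rw [hp2]
        have hval : (E:ℂ) * Complex.exp ((((N:ℤ)-1 : ℤ):ℂ)*θ*I)
            - (0 + Complex.exp ((((N:ℤ)-1 : ℤ):ℂ)*θ*I) * Complex.exp (-((θ:ℂ)*I))
              + (v i : ℂ) * Complex.exp ((((N:ℤ)-1 : ℤ):ℂ)*θ*I))
            = Complex.exp ((((N:ℤ)-1 : ℤ):ℂ)*θ*I) * Complex.exp ((θ:ℂ)*I) := by
          linear_combination -Complex.exp ((((N:ℤ)-1 : ℤ):ℂ)*θ*I) * key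
        rw [hval, norm_mul, hnorm_e ((N:ℤ)-1), hnorm3]
        norm_num
      · -- n = N
        subst h
        rw [hwcoord, hu_out (N:ℤ) (by omega), hu_out ((N:ℤ)+1) (by omega),
          hu_in ((N:ℤ)-1) (by omega) (by omega)]
        rw [show (E:ℂ) * 0 - (0 + Complex.exp ((((N:ℤ)-1 : ℤ):ℂ)*θ*I)
          + (v (ω (N:ℤ)) : ℂ) * 0) = -Complex.exp ((((N:ℤ)-1 : ℤ):ℂ)*θ*I) by ring,
          norm_neg, hnorm_e ((N:ℤ)-1)]
        norm_num
    · rw [if_neg hcase]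
      push_neg at hcase
      obtain ⟨hc1, hc2, hc3, hc4⟩ := hcase
      by_cases hlt : n < -1
      · rw [hwcoord, hu_out n (by omega), hu_out (n+1) (by omega), hu_out (n-1) (by omega)]
        rw [show (E:ℂ) * 0 - (0 + 0 + (v (ω n) : ℂ) * 0) = 0 by ring, norm_zero]
        norm_num
      · by_cases hgt : (N:ℤ) < n
        · rw [hwcoord, hu_out n (by omega), hu_out (n+1) (by omega), hu_out (n-1) (by omega)]
          rw [show (E:ℂ) * 0 - (0 + 0 + (v (ω n) : ℂ) * 0) = 0 by ring, norm_zero]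
          norm_num
        · -- interior : 1 ≤ n ≤ N-2
          rw [hwcoord, hu_in n (by omega) (by omega), hu_in (n+1) (by omega) (by omega),
            hu_in (n-1) (by omega) (by omega), hωi n (by omega) (by omega)]
          have hp1 : Complex.exp (((n+1 : ℤ):ℂ)*θ*I)
              = Complex.exp ((n:ℂ)*θ*I) * Complex.exp ((θ:ℂ)*I) := by
            rw [← Complex.exp_add]; congr 1; push_cast; ring
          have hp2 : Complex.exp (((n-1 : ℤ):ℂ)*θ*I)
              = Complex.exp ((n:ℂ)*θ*I) * Complex.exp (-((θ:ℂ)*I)) := by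
            rw [← Complex.exp_add]; congr 1; push_cast; ring
          rw [hp1, hp2]
          have hval : (E:ℂ) * Complex.exp ((n:ℂ)*θ*I)
              - (Complex.exp ((n:ℂ)*θ*I) * Complex.exp ((θ:ℂ)*I)
                + Complex.exp ((n:ℂ)*θ*I) * Complex.exp (-((θ:ℂ)*I))
                + (v i : ℂ) * Complex.exp ((n:ℂ)*θ*I)) = 0 := by
            linear_combination -Complex.exp ((n:ℂ)*θ*I) * key
          rw [hval, norm_zero]
          norm_num
  -- sum the bound
  have hoff : ∀ n ∉ ({-1, 0, (N:ℤ)-1, (N:ℤ)} : Finset ℤ),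
      (if n = -1 ∨ n = 0 ∨ n = (N:ℤ)-1 ∨ n = (N:ℤ) then (1:ℝ) else 0) = 0 := by
    intro n hn
    simp only [Finset.mem_insert, Finset.mem_singleton] at hn
    rw [if_neg (by tauto)]
  have hb_summable : Summable (fun n : ℤ =>
      if n = -1 ∨ n = 0 ∨ n = (N:ℤ)-1 ∨ n = (N:ℤ) then (1:ℝ) else 0) :=
    summable_of_ne_finset_zero (s := ({-1, 0, (N:ℤ)-1, (N:ℤ)} : Finset ℤ)) hoff
  have hw2 : ‖T' U‖ ^ 2 ≤ 4 := by
    rw [lp2_norm_sq]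
    refine (Summable.tsum_le_tsum hbound (lp2_summable_sq (T' U)) hb_summable).trans ?_
    rw [tsum_eq_sum (s := ({-1, 0, (N:ℤ)-1, (N:ℤ)} : Finset ℤ)) hoff]
    have hcard : ({-1, 0, (N:ℤ)-1, (N:ℤ)} : Finset ℤ).card ≤ 4 := by
      refine le_trans (Finset.card_insert_le _ _) (Nat.succ_le_succ ?_)
      refine le_trans (Finset.card_insert_le _ _) (Nat.succ_le_succ ?_)
      refine le_trans (Finset.card_insert_le _ _) (Nat.succ_le_succ ?_)
      simp
    calc ∑ n ∈ ({-1, 0, (N:ℤ)-1, (N:ℤ)} : Finset ℤ),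
          (if n = -1 ∨ n = 0 ∨ n = (N:ℤ)-1 ∨ n = (N:ℤ) then (1:ℝ) else 0)
        ≤ ∑ _n ∈ ({-1, 0, (N:ℤ)-1, (N:ℤ)} : Finset ℤ), (1:ℝ) :=
          Finset.sum_le_sum (fun n hn => by split <;> norm_num)
      _ = (({-1, 0, (N:ℤ)-1, (N:ℤ)} : Finset ℤ).card : ℝ) := by
          rw [Finset.sum_const]; simp
      _ ≤ 4 := by exact_mod_cast hcard
  -- contradiction
  have hlow := aux_lower_bound T' hT'sa hunit hd hspecb U
  have h1 : (d * ‖U‖) ^ 2 ≤ ‖T' U‖ ^ 2 := by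
    apply pow_le_pow_left₀ (by positivity) hlow
  rw [mul_pow, hUnorm] at h1
  have h2 : d ^ 2 * (N:ℝ) ≤ 4 := h1.trans hw2
  have h3 : (4:ℝ) < (N:ℝ) * d ^ 2 := (div_lt_iff₀ (by positivity)).1 hNd
  nlinarith
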